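/- Under the hypotheses of the Sp(n,ℝ)_ℂ action on the Siegel ball, the differential of the moved point W₁ = (pW + q)(q̄W + p̄)⁻¹ satisfies dW₁ = (Wq* + p*)⁻¹ dW (q̄W + p̄)⁻¹. Consequently, the trace form Tr(M dW M̄ dW̄) is invariant: Tr(M₁ dW₁ M̄₁ dW̄₁) = Tr(M dW M̄ dW̄). -/

import Mathlib

open Matrix

noncomputable section

/-- entrywise complex conjugation of a matrix -/
def mconj {m n : Type*} (A : Matrix m n ℂ) : Matrix m n ℂ := A.map (starRingEnd ℂ)

section auxiliary

attribute [local instance] Matrix.linftyOpNormedRing Matrix.linftyOpNormedAlgebra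

variable {n : ℕ}

@[simp] lemma mconj_mul (A B : Matrix (Fin n) (Fin n) ℂ) : mconj (A * B) = mconj A * mconj B :=
  Matrix.map_mul

@[simp] lemma mconj_add (A B : Matrix (Fin n) (Fin n) ℂ) : mconj (A + B) = mconj A + mconj B := by
  ext i j; simp [mconj]

@[simp] lemma mconj_sub (A B : Matrix (Fin n) (Fin n) ℂ) : mconj (A - B) = mconj A - mconj B := by
  ext i j; simp [mconj]

@[simp] lemma mconj_one : mconj (1 : Matrix (Fin n) (Fin n) ℂ) = 1 := by
  ext i j; simp [mconj, Matrix.one_apply, apply_ite]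

@[simp] lemma mconj_mconj (A : Matrix (Fin n) (Fin n) ℂ) : mconj (mconj A) = A := by
  ext i j; simp [mconj]

@[simp] lemma mconj_transpose (A : Matrix (Fin n) (Fin n) ℂ) : mconj (Aᵀ) = Aᴴ := by
  ext i j; simp [mconj, Matrix.conjTranspose_apply]

@[simp] lemma mconj_conjTranspose (A : Matrix (Fin n) (Fin n) ℂ) : mconj (Aᴴ) = Aᵀ := by
  ext i j; simp [mconj, Matrix.conjTranspose_apply]

@[simp] lemma transpose_mconj (A : Matrix (Fin n) (Fin n) ℂ) : (mconj A)ᵀ = Aᴴ := by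
  ext i j; simp [mconj, Matrix.conjTranspose_apply]

lemma isUnit_mconj {A : Matrix (Fin n) (Fin n) ℂ} (h : IsUnit A) : IsUnit (mconj A) := by
  rw [Matrix.isUnit_iff_isUnit_det] at h ⊢
  rw [mconj, show A.map ⇑(starRingEnd ℂ) = (starRingEnd ℂ).mapMatrix A from rfl,
    ← RingHom.map_det]
  exact h.map _

lemma mconj_inv {A : Matrix (Fin n) (Fin n) ℂ} (h : IsUnit A) : mconj (A⁻¹) = (mconj A)⁻¹ := by
  symm
  apply Matrix.inv_eq_right_inv
  rw [← mconj_mul, Matrix.mul_nonsing_inv _ ((Matrix.isUnit_iff_isUnit_det _).mp h), mconj_one]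

section keys
variable {p q : Matrix (Fin n) (Fin n) ℂ}
  (h3 : pᴴ * p - qᵀ * mconj q = 1) (h4 : pᵀ * mconj q = qᴴ * p)
  (h3' : pᵀ * mconj p - qᴴ * q = 1) (h4' : pᴴ * q = qᵀ * mconj p)
  (W : Matrix (Fin n) (Fin n) ℂ)

include h3 h4 h3' h4' in
lemma key1 : (W * qᴴ + pᴴ) * (p * W + q) = (W * pᵀ + qᵀ) * (mconj q * W + mconj p) := by
  have e1 : qᴴ * p = pᵀ * mconj q := h4.symm
  have e2 : pᴴ * p = 1 + qᵀ * mconj q := sub_eq_iff_eq_add.mp h3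
  have e3 : qᴴ * q = pᵀ * mconj p - 1 := by rw [← h3']; noncomm_ring
  calc (W * qᴴ + pᴴ) * (p * W + q)
      = W * (qᴴ * p) * W + W * (qᴴ * q) + (pᴴ * p) * W + (pᴴ * q) := by noncomm_ring
    _ = W * (pᵀ * mconj q) * W + W * (pᵀ * mconj p - 1) + (1 + qᵀ * mconj q) * W
        + (qᵀ * mconj p) := by rw [e1, e2, e3, h4']
    _ = (W * pᵀ + qᵀ) * (mconj q * W + mconj p) := by noncomm_ring

include h3 h4 h3' h4' in
lemma key2 : (W * qᴴ + pᴴ) * (q * mconj W + p)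
    - (W * pᵀ + qᵀ) * (mconj p * mconj W + mconj q) = 1 - W * mconj W := by
  have e1 : qᴴ * p = pᵀ * mconj q := h4.symm
  have e2 : pᴴ * p = 1 + qᵀ * mconj q := sub_eq_iff_eq_add.mp h3
  have e3 : qᴴ * q = pᵀ * mconj p - 1 := by rw [← h3']; noncomm_ring
  calc (W * qᴴ + pᴴ) * (q * mconj W + p) - (W * pᵀ + qᵀ) * (mconj p * mconj W + mconj q)
      = W * (qᴴ * q) * mconj W + W * (qᴴ * p) + (pᴴ * q) * mconj W + (pᴴ * p)
        - W * (pᵀ * mconj p) * mconj W - W * (pᵀ * mconj q) - (qᵀ * mconj p) * mconj W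
        - qᵀ * mconj q := by noncomm_ring
    _ = W * (pᵀ * mconj p - 1) * mconj W + W * (pᵀ * mconj q) + (qᵀ * mconj p) * mconj W
        + (1 + qᵀ * mconj q)
        - W * (pᵀ * mconj p) * mconj W - W * (pᵀ * mconj q) - (qᵀ * mconj p) * mconj W
        - qᵀ * mconj q := by rw [e1, e2, e3, h4']
    _ = 1 - W * mconj W := by noncomm_ring

include h3 h4 in
lemma key3 : (W * qᴴ + pᴴ) * p - (W * pᵀ + qᵀ) * mconj q = 1 := by
  have e1 : qᴴ * p = pᵀ * mconj q := h4.symm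
  have e2 : pᴴ * p = 1 + qᵀ * mconj q := sub_eq_iff_eq_add.mp h3
  calc (W * qᴴ + pᴴ) * p - (W * pᵀ + qᵀ) * mconj q
      = W * (qᴴ * p) + (pᴴ * p) - W * (pᵀ * mconj q) - qᵀ * mconj q := by noncomm_ring
    _ = W * (pᵀ * mconj q) + (1 + qᵀ * mconj q) - W * (pᵀ * mconj q) - qᵀ * mconj q := by
        rw [e1, e2]
    _ = 1 := by noncomm_ring

lemma h3'_of (h3 : pᴴ * p - qᵀ * mconj q = 1) : pᵀ * mconj p - qᴴ * q = 1 := by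
  have := congrArg mconj h3
  simpa using this

lemma h4'_of (h4 : pᵀ * mconj q = qᴴ * p) : pᴴ * q = qᵀ * mconj p := by
  have := congrArg mconj h4
  simpa using this

end keys

/-- The identity linear equivalence between matrices and the corresponding pi type. -/
def matLE : Matrix (Fin n) (Fin n) ℂ ≃ₗ[ℂ] (Fin n → Fin n → ℂ) where
  toFun M i j := M i j
  invFun := Matrix.of
  map_add' _ _ := rfl
  map_smul' _ _ := rfl
  left_inv _ := rfl
  right_inv _ := rfl

/-- The identity continuous linear equivalence between matrices (with the `L∞` operator norm)
and the corresponding pi type. -/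
def matCLE : Matrix (Fin n) (Fin n) ℂ ≃L[ℂ] (Fin n → Fin n → ℂ) :=
  matLE.toContinuousLinearEquiv

lemma hasDerivAt_matrix {f : ℝ → Matrix (Fin n) (Fin n) ℂ} {f' : Matrix (Fin n) (Fin n) ℂ}
    {t : ℝ} :
    HasDerivAt f f' t ↔ ∀ i j, HasDerivAt (fun s => f s i j) (f' i j) t := by
  constructor
  · intro h i j
    have h1 : HasDerivAt (fun s => matCLE (f s)) (matCLE f') t :=
      ((matCLE.toContinuousLinearMap.restrictScalars ℝ).hasFDerivAt
        (x := f t)).comp_hasDerivAt t h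
    exact hasDerivAt_pi.mp (hasDerivAt_pi.mp h1 i) j
  · intro h
    have h1 : HasDerivAt (fun s => matCLE (f s)) (matCLE f') t :=
      hasDerivAt_pi.mpr fun i => hasDerivAt_pi.mpr fun j => h i j
    have h2 := ((matCLE.symm.toContinuousLinearMap.restrictScalars ℝ).hasFDerivAt
      (x := matCLE (f t))).comp_hasDerivAt t h1
    exact h2

local instance : CompleteSpace (Matrix (Fin n) (Fin n) ℂ) := FiniteDimensional.complete ℂ _

variable {p q : Matrix (Fin n) (Fin n) ℂ}

/-- Part (a): the derivative of the moved point, at the level of matrix-valued functions. -/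
lemma parta
    (h3 : pᴴ * p - qᵀ * mconj q = 1) (h4 : pᵀ * mconj q = qᴴ * p)
    (W : ℝ → Matrix (Fin n) (Fin n) ℂ) (W' : Matrix (Fin n) (Fin n) ℂ) (t : ℝ)
    (hW : ∀ i j, HasDerivAt (fun s => W s i j) (W' i j) t)
    (hUA : IsUnit (mconj q * W t + mconj p)) :
    HasDerivAt (fun s => (p * W s + q) * (mconj q * W s + mconj p)⁻¹)
      ((W t * qᴴ + pᴴ)⁻¹ * W' * (mconj q * W t + mconj p)⁻¹) t := by
  have h3' := h3'_of h3
  have h4' := h4'_of h4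
  have hWm : HasDerivAt W W' t := hasDerivAt_matrix.mpr hW
  have hA : HasDerivAt (fun s => mconj q * W s + mconj p) (mconj q * W') t :=
    (hWm.const_mul (mconj q)).add_const (mconj p)
  have hNum : HasDerivAt (fun s => p * W s + q) (p * W') t :=
    (hWm.const_mul p).add_const q
  obtain ⟨u, hu⟩ := hUA
  have hdA : IsUnit (mconj q * W t + mconj p).det :=
    (Matrix.isUnit_iff_isUnit_det _).mp ⟨u, hu⟩
  have hAA : (mconj q * W t + mconj p) * (mconj q * W t + mconj p)⁻¹ = 1 :=
    Matrix.mul_nonsing_inv _ hdA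
  have hinv : HasDerivAt (fun s => Ring.inverse (mconj q * W s + mconj p))
      (-((mconj q * W t + mconj p)⁻¹ * (mconj q * W') * (mconj q * W t + mconj p)⁻¹)) t := by
    have h0 : HasFDerivAt Ring.inverse
        (-ContinuousLinearMap.mulLeftRight ℝ (Matrix (Fin n) (Fin n) ℂ) ↑u⁻¹ ↑u⁻¹)
        (mconj q * W t + mconj p) := by
      rw [← hu]; exact hasFDerivAt_ringInverse u
    have h1 := h0.comp_hasDerivAt t hA
    have h2 : (↑u⁻¹ : Matrix (Fin n) (Fin n) ℂ) = (mconj q * W t + mconj p)⁻¹ := by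
      rw [Matrix.coe_units_inv, hu]
    simp [h2, ContinuousLinearMap.mulLeftRight_apply, Function.comp_def] at h1; exact h1
  have hprod := hNum.mul hinv
  rw [← Matrix.nonsing_inv_eq_ringInverse] at hprod
  have hXB : (W t * qᴴ + pᴴ) * (p - (p * W t + q) * (mconj q * W t + mconj p)⁻¹ * mconj q)
      = 1 := by
    calc (W t * qᴴ + pᴴ) * (p - (p * W t + q) * (mconj q * W t + mconj p)⁻¹ * mconj q)
        = (W t * qᴴ + pᴴ) * p
          - ((W t * qᴴ + pᴴ) * (p * W t + q)) * (mconj q * W t + mconj p)⁻¹ * mconj q := by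
          noncomm_ring
      _ = (W t * qᴴ + pᴴ) * p
          - (W t * pᵀ + qᵀ) * ((mconj q * W t + mconj p) * (mconj q * W t + mconj p)⁻¹)
            * mconj q := by rw [key1 h3 h4 h3' h4' (W t)]; noncomm_ring
      _ = (W t * qᴴ + pᴴ) * p - (W t * pᵀ + qᵀ) * mconj q := by rw [hAA, mul_one]
      _ = 1 := key3 h3 h4 (W t)
  have hBinv : (W t * qᴴ + pᴴ)⁻¹
      = p - (p * W t + q) * (mconj q * W t + mconj p)⁻¹ * mconj q :=
    Matrix.inv_eq_right_inv hXB
  have hval : p * W' * (mconj q * W t + mconj p)⁻¹ + (p * W t + q) *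
        -((mconj q * W t + mconj p)⁻¹ * (mconj q * W') * (mconj q * W t + mconj p)⁻¹)
      = (W t * qᴴ + pᴴ)⁻¹ * W' * (mconj q * W t + mconj p)⁻¹ := by
    rw [hBinv]; noncomm_ring
  have hfun : (fun s => (p * W s + q) * (mconj q * W s + mconj p)⁻¹)
      = fun s => (p * W s + q) * Ring.inverse (mconj q * W s + mconj p) := by
    funext s; rw [Matrix.nonsing_inv_eq_ringInverse]
  rw [hfun, ← hval]
  exact hprod

set_option maxHeartbeats 1000000 in
/-- Part (b): invariance of the trace form. -/
lemma partb
    (h3 : pᴴ * p - qᵀ * mconj q = 1) (h4 : pᵀ * mconj q = qᴴ * p)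
    (W dW : Matrix (Fin n) (Fin n) ℂ)
    (hsym : Wᵀ = W)
    (hUA : IsUnit (mconj q * W + mconj p)) :
    Matrix.trace
      (((1 : Matrix (Fin n) (Fin n) ℂ)
          - ((p * W + q) * (mconj q * W + mconj p)⁻¹)
            * mconj ((p * W + q) * (mconj q * W + mconj p)⁻¹))⁻¹
        * ((W * qᴴ + pᴴ)⁻¹ * dW * (mconj q * W + mconj p)⁻¹)
        * mconj (((1 : Matrix (Fin n) (Fin n) ℂ)
          - ((p * W + q) * (mconj q * W + mconj p)⁻¹)
            * mconj ((p * W + q) * (mconj q * W + mconj p)⁻¹))⁻¹)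
        * mconj ((W * qᴴ + pᴴ)⁻¹ * dW * (mconj q * W + mconj p)⁻¹))
    = Matrix.trace (((1 : Matrix (Fin n) (Fin n) ℂ) - W * mconj W)⁻¹ * dW
        * mconj (((1 : Matrix (Fin n) (Fin n) ℂ) - W * mconj W)⁻¹) * mconj dW) := by
  have h3' := h3'_of h3
  have h4' := h4'_of h4
  set A := mconj q * W + mconj p with hAdef
  set B := W * qᴴ + pᴴ with hBdef
  set M := ((1 : Matrix (Fin n) (Fin n) ℂ) - W * mconj W)⁻¹ with hMdef
  have hBA : B = Aᵀ := by
    simp [hAdef, hBdef, Matrix.transpose_add, Matrix.transpose_mul, hsym]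
  have hUB : IsUnit B := by
    rw [hBA, Matrix.isUnit_iff_isUnit_det, Matrix.det_transpose,
      ← Matrix.isUnit_iff_isUnit_det]; exact hUA
  have hUAb : IsUnit (mconj A) := isUnit_mconj hUA
  have hUBb : IsUnit (mconj B) := isUnit_mconj hUB
  have hdA := (Matrix.isUnit_iff_isUnit_det A).mp hUA
  have hdB := (Matrix.isUnit_iff_isUnit_det B).mp hUB
  have hdAb := (Matrix.isUnit_iff_isUnit_det (mconj A)).mp hUAb
  have hdBb := (Matrix.isUnit_iff_isUnit_det (mconj B)).mp hUBb
  have hBB : B * B⁻¹ = 1 := Matrix.mul_nonsing_inv _ hdB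
  have hBiB : B⁻¹ * B = 1 := Matrix.nonsing_inv_mul _ hdB
  have hAA : A * A⁻¹ = 1 := Matrix.mul_nonsing_inv _ hdA
  have hAiA : A⁻¹ * A = 1 := Matrix.nonsing_inv_mul _ hdA
  have hAbAb : mconj A * (mconj A)⁻¹ = 1 := Matrix.mul_nonsing_inv _ hdAb
  have hBbBb : mconj B * (mconj B)⁻¹ = 1 := Matrix.mul_nonsing_inv _ hdBb
  have hAbc : mconj A = q * mconj W + p := by rw [hAdef]; simp
  have hW1B : (p * W + q) * A⁻¹ = B⁻¹ * (W * pᵀ + qᵀ) := by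
    have k := key1 h3 h4 h3' h4' W
    rw [← hAdef, ← hBdef] at k
    calc (p * W + q) * A⁻¹ = (B⁻¹ * B) * ((p * W + q) * A⁻¹) := by rw [hBiB, one_mul]
      _ = B⁻¹ * ((B * (p * W + q)) * A⁻¹) := by rw [mul_assoc, ← mul_assoc B]
      _ = B⁻¹ * (((W * pᵀ + qᵀ) * A) * A⁻¹) := by rw [k]
      _ = B⁻¹ * (W * pᵀ + qᵀ) := by rw [mul_assoc (W * pᵀ + qᵀ), hAA, mul_one]
  have hmW1 : mconj ((p * W + q) * A⁻¹)
      = (mconj p * mconj W + mconj q) * (mconj A)⁻¹ := by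
    rw [mconj_mul, mconj_inv hUA]; simp
  have hM1 : (1 : Matrix (Fin n) (Fin n) ℂ) - ((p * W + q) * A⁻¹) * mconj ((p * W + q) * A⁻¹)
      = B⁻¹ * (1 - W * mconj W) * (mconj A)⁻¹ := by
    have k2 := key2 h3 h4 h3' h4' W
    rw [← hBdef] at k2
    rw [hmW1, hW1B]
    calc (1 : Matrix (Fin n) (Fin n) ℂ)
        - (B⁻¹ * (W * pᵀ + qᵀ)) * ((mconj p * mconj W + mconj q) * (mconj A)⁻¹)
        = (B⁻¹ * B) * (mconj A * (mconj A)⁻¹)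
          - (B⁻¹ * (W * pᵀ + qᵀ)) * ((mconj p * mconj W + mconj q) * (mconj A)⁻¹) := by
            rw [hBiB, hAbAb, one_mul]
      _ = B⁻¹ * ((B * mconj A) - (W * pᵀ + qᵀ) * (mconj p * mconj W + mconj q))
          * (mconj A)⁻¹ := by noncomm_ring
      _ = B⁻¹ * (1 - W * mconj W) * (mconj A)⁻¹ := by rw [hAbc, k2]
  have hM1eq : ((1 : Matrix (Fin n) (Fin n) ℂ)
      - ((p * W + q) * A⁻¹) * mconj ((p * W + q) * A⁻¹))⁻¹ = mconj A * M * B := by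
    rw [hM1, Matrix.mul_inv_rev, Matrix.mul_inv_rev,
      Matrix.nonsing_inv_nonsing_inv _ hdAb, Matrix.nonsing_inv_nonsing_inv _ hdB, hMdef]
    noncomm_ring
  rw [hM1eq]
  have hmM1 : mconj (mconj A * M * B) = A * mconj M * mconj B := by simp
  have hmdW1 : mconj (B⁻¹ * dW * A⁻¹) = (mconj B)⁻¹ * mconj dW * (mconj A)⁻¹ := by
    rw [mconj_mul, mconj_mul, mconj_inv hUB, mconj_inv hUA]
  have hprod : (mconj A * M * B) * (B⁻¹ * dW * A⁻¹) * (A * mconj M * mconj B)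
      * ((mconj B)⁻¹ * mconj dW * (mconj A)⁻¹)
      = mconj A * (M * dW * mconj M * mconj dW) * (mconj A)⁻¹ := by
    calc (mconj A * M * B) * (B⁻¹ * dW * A⁻¹) * (A * mconj M * mconj B)
        * ((mconj B)⁻¹ * mconj dW * (mconj A)⁻¹)
        = mconj A * M * (B * B⁻¹) * dW * (A⁻¹ * A) * mconj M
          * (mconj B * (mconj B)⁻¹) * mconj dW * (mconj A)⁻¹ := by
          simp only [mul_assoc]
      _ = mconj A * (M * dW * mconj M * mconj dW) * (mconj A)⁻¹ := by
          rw [hBB, hAiA, hBbBb]; simp only [mul_assoc, one_mul, mul_one]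
  rw [hmM1, hmdW1, hprod]
  exact Matrix.trace_conj hUAb _

end auxiliary

/-- dW₁ = (Wq* + p*)⁻¹ dW (q̄W + p̄)⁻¹ for the Sp(n,ℝ)_ℂ action on the
Siegel ball (stated for any differentiable curve W(t)), and consequently the trace form
Tr(M dW M̄ dW̄) is invariant. -/
theorem dW_transformation_and_trace_invariance (n : ℕ)
    (p q : Matrix (Fin n) (Fin n) ℂ)
    (h1 : p * pᴴ - q * qᴴ = 1) (h2 : p * qᵀ = q * pᵀ)
    (h3 : pᴴ * p - qᵀ * mconj q = 1) (h4 : pᵀ * mconj q = qᴴ * p) :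
    -- (a) derivative of the moved point along any curve W(t)
    (∀ (W : ℝ → Matrix (Fin n) (Fin n) ℂ) (W' : Matrix (Fin n) (Fin n) ℂ) (t : ℝ),
      (∀ i j, HasDerivAt (fun s => W s i j) (W' i j) t) →
      (W t)ᵀ = W t →
      IsUnit ((1 : Matrix (Fin n) (Fin n) ℂ) - W t * mconj (W t)) →
      IsUnit (mconj q * W t + mconj p) →
      ∀ i j, HasDerivAt (fun s => ((p * W s + q) * (mconj q * W s + mconj p)⁻¹) i j)
        (((W t * qᴴ + pᴴ)⁻¹ * W' * (mconj q * W t + mconj p)⁻¹) i j) t)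
    ∧
    -- (b) invariance of the trace form
    (∀ (W dW : Matrix (Fin n) (Fin n) ℂ),
      Wᵀ = W →
      IsUnit ((1 : Matrix (Fin n) (Fin n) ℂ) - W * mconj W) →
      IsUnit (mconj q * W + mconj p) →
      let W₁ := (p * W + q) * (mconj q * W + mconj p)⁻¹
      let dW₁ := (W * qᴴ + pᴴ)⁻¹ * dW * (mconj q * W + mconj p)⁻¹
      let M := ((1 : Matrix (Fin n) (Fin n) ℂ) - W * mconj W)⁻¹
      let M₁ := ((1 : Matrix (Fin n) (Fin n) ℂ) - W₁ * mconj W₁)⁻¹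
      Matrix.trace (M₁ * dW₁ * mconj M₁ * mconj dW₁)
        = Matrix.trace (M * dW * mconj M * mconj dW)) := by
  constructor
  · intro W W' t hW _ _ hUA i j
    exact hasDerivAt_matrix.mp (parta h3 h4 W W' t hW hUA) i j
  · intro W dW hsym _ hUA
    exact partb h3 h4 W dW hsym hUA
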